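/- arXiv:1810.02421 — 2 statements merged into one kernel-verified Lean document; each statement's English description precedes it below -/
import Mathlib

section
/- The modulus of the family of all curves in the rectangle [0,a]×[0,b] joining the two vertical sides {0}×[0,b] and {a}×[0,b] equals b/a. -/
open MeasureTheory

/-- Line integral of a density `ρ` along a curve `γ : ℝ → ℂ` parametrized on `[0,1]`. -/
noncomputable def densityCurveIntegral (ρ : ℂ → ℝ) (γ : ℝ → ℂ) : ℝ :=
  ∫ t in (0:ℝ)..1, ρ (γ t) * ‖deriv γ t‖

/-- `ρ` is an allowable (admissible) metric for the curve family `Γ`. -/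
def Allowable (ρ : ℂ → ℝ) (Γ : Set (ℝ → ℂ)) : Prop :=
  Measurable ρ ∧ (∀ z, 0 ≤ ρ z) ∧ ∀ γ ∈ Γ, 1 ≤ densityCurveIntegral ρ γ

/-- The modulus of a curve family. -/
noncomputable def modulus (Γ : Set (ℝ → ℂ)) : ENNReal :=
  ⨅ (ρ : ℂ → ℝ) (_ : Allowable ρ Γ), ∫⁻ z : ℂ, ENNReal.ofReal (ρ z ^ 2)

namespace ModulusRect

/-- The family of curves in the rectangle joining the vertical sides. -/
def Fam (a b : ℝ) : Set (ℝ → ℂ) :=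
  {γ : ℝ → ℂ | ContDiff ℝ 1 γ ∧
    (∀ t ∈ Set.Icc (0:ℝ) 1, (γ t).re ∈ Set.Icc 0 a ∧ (γ t).im ∈ Set.Icc 0 b) ∧
    (γ 0).re = 0 ∧ (γ 1).re = a}

variable {a b : ℝ}

lemma upper (ha : 0 < a) (hb : 0 < b) : modulus (Fam a b) ≤ ENNReal.ofReal (b / a) := by
  classical
  set R : Set ℂ := {z | z.re ∈ Set.Icc 0 a ∧ z.im ∈ Set.Icc 0 b} with hRdef
  have hR : MeasurableSet R :=
    (Complex.measurable_re measurableSet_Icc).inter (Complex.measurable_im measurableSet_Icc)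
  set ρ₀ : ℂ → ℝ := R.indicator (fun _ => a⁻¹) with hρ₀
  have hAllow : Allowable ρ₀ (Fam a b) := by
    refine ⟨measurable_const.indicator hR,
      fun z => Set.indicator_nonneg (fun _ _ => by positivity) z, ?_⟩
    rintro γ ⟨hγ, hmem, h0, h1⟩
    have hd : Differentiable ℝ γ := hγ.differentiable one_ne_zero
    have hdc : Continuous (deriv γ) := hγ.continuous_deriv le_rfl
    have heq : Set.EqOn (fun t => ρ₀ (γ t) * ‖deriv γ t‖)
        (fun t => a⁻¹ * ‖deriv γ t‖) (Set.uIcc (0:ℝ) 1) := by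
      intro t ht
      rw [Set.uIcc_of_le zero_le_one] at ht
      have hmem' := hmem t ht
      simp only [hρ₀]
      rw [Set.indicator_of_mem]
      exact hmem'
    have hci : densityCurveIntegral ρ₀ γ = a⁻¹ * ∫ t in (0:ℝ)..1, ‖deriv γ t‖ := by
      rw [densityCurveIntegral, intervalIntegral.integral_congr heq,
        intervalIntegral.integral_const_mul]
    rw [hci]
    have hkey : a ≤ ∫ t in (0:ℝ)..1, ‖deriv γ t‖ := by
      have hfund : ∫ t in (0:ℝ)..1, deriv γ t = γ 1 - γ 0 :=
        intervalIntegral.integral_deriv_eq_sub (fun t _ => hd t)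
          (hdc.intervalIntegrable 0 1)
      calc a = (γ 1 - γ 0).re := by simp [Complex.sub_re, h0, h1]
        _ ≤ |(γ 1 - γ 0).re| := le_abs_self _
        _ ≤ ‖γ 1 - γ 0‖ := Complex.abs_re_le_norm _
        _ = ‖∫ t in (0:ℝ)..1, deriv γ t‖ := by rw [hfund]
        _ ≤ ∫ t in (0:ℝ)..1, ‖deriv γ t‖ :=
            intervalIntegral.norm_integral_le_integral_norm zero_le_one
    calc (1:ℝ) = a⁻¹ * a := by field_simp
      _ ≤ a⁻¹ * ∫ t in (0:ℝ)..1, ‖deriv γ t‖ :=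
          mul_le_mul_of_nonneg_left hkey (by positivity)
  refine le_trans (iInf₂_le ρ₀ hAllow) (le_of_eq ?_)
  have h1 : ∀ z : ℂ, ENNReal.ofReal (ρ₀ z ^ 2)
      = R.indicator (fun _ => ENNReal.ofReal (a⁻¹ ^ 2)) z := by
    intro z
    by_cases hz : z ∈ R
    · simp [hρ₀, Set.indicator_of_mem hz]
    · simp [hρ₀, Set.indicator_of_notMem hz]
  rw [lintegral_congr h1, lintegral_indicator hR _, setLIntegral_const]
  have hvol : volume R = ENNReal.ofReal a * ENNReal.ofReal b := by
    have hRp : R = Complex.measurableEquivRealProd ⁻¹' (Set.Icc 0 a ×ˢ Set.Icc 0 b) := by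
      ext z
      simp only [hRdef, Set.mem_setOf_eq, Set.mem_preimage,
        Complex.measurableEquivRealProd_apply, Set.mem_prod, Set.mem_Icc]
    rw [hRp, Complex.volume_preserving_equiv_real_prod.measure_preimage
      (measurableSet_Icc.prod measurableSet_Icc).nullMeasurableSet]
    rw [MeasureTheory.Measure.volume_eq_prod, Measure.prod_prod, Real.volume_Icc,
      Real.volume_Icc]
    simp
  rw [hvol, ← mul_assoc, ← ENNReal.ofReal_mul (by positivity),
    ← ENNReal.ofReal_mul (by positivity)]
  congr 1
  field_simp

lemma lower (ha : 0 < a) (hb : 0 < b) : ENNReal.ofReal (b / a) ≤ modulus (Fam a b) := by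
  refine le_iInf fun ρ => le_iInf fun hρ => ?_
  obtain ⟨hmeas, hnn, hadm⟩ := hρ
  set F : ℂ → ENNReal := fun z => ENNReal.ofReal (ρ z ^ 2) with hF
  have hFmeas : Measurable F := ENNReal.measurable_ofReal.comp (hmeas.pow_const 2)
  -- key horizontal-line bound
  have key : ∀ y ∈ Set.Ioo (0:ℝ) b,
      ENNReal.ofReal (1/a) ≤ ∫⁻ x in Set.Ioo 0 a, F ((x:ℂ) + (y:ℂ) * Complex.I) := by
    intro y hy
    set γ : ℝ → ℂ := fun t => ((a*t : ℝ) : ℂ) + (y:ℂ) * Complex.I with hγdef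
    have hγeq : γ = fun t : ℝ => (a:ℂ) * ((t:ℝ):ℂ) + (y:ℂ) * Complex.I := by
      funext t; simp [hγdef]
    have hder : ∀ t : ℝ, HasDerivAt γ (a:ℂ) t := by
      intro t
      rw [hγeq]
      have h := (((hasDerivAt_id (((t:ℝ):ℂ))).const_mul (a:ℂ)).add_const
        ((y:ℂ) * Complex.I)).comp_ofReal
      simpa using h
    have hderiv : ∀ t : ℝ, deriv γ t = (a:ℂ) := fun t => (hder t).deriv
    have hγc : Continuous γ := by
      rw [hγeq]
      exact (continuous_const.mul Complex.continuous_ofReal).add continuous_const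
    have hmemΓ : γ ∈ Fam a b := by
      refine ⟨?_, ?_, ?_, ?_⟩
      · rw [hγeq]
        exact (contDiff_const.mul Complex.ofRealCLM.contDiff).add contDiff_const
      · intro t ht
        constructor
        · have : (γ t).re = a * t := by simp [hγdef]
          rw [this]
          constructor
          · exact mul_nonneg ha.le ht.1
          · nlinarith [ht.2, ha.le]
        · have : (γ t).im = y := by simp [hγdef]
          rw [this]
          exact ⟨hy.1.le, hy.2.le⟩
      · simp [hγdef]
      · simp [hγdef]
    have hint : 1 ≤ densityCurveIntegral ρ γ := hadm γ hmemΓ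
    set g : ℝ → ℝ := fun t => ρ (γ t) * a with hg
    have hci : densityCurveIntegral ρ γ = ∫ t in (0:ℝ)..1, g t := by
      unfold densityCurveIntegral
      congr 1
      funext t
      rw [hderiv t]
      simp [hg, Complex.norm_real, abs_of_pos ha]
    rw [hci] at hint
    have hgInt : IntervalIntegrable g volume 0 1 := by
      by_contra hcon
      rw [intervalIntegral.integral_undef hcon] at hint
      linarith
    have hgi : IntegrableOn g (Set.Ioc 0 1) :=
      (intervalIntegrable_iff_integrableOn_Ioc_of_le zero_le_one).1 hgInt
    have hIoc : (1:ℝ) ≤ ∫ t in Set.Ioc (0:ℝ) 1, g t := by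
      rwa [intervalIntegral.integral_of_le zero_le_one] at hint
    have hres : volume.restrict (Set.Ioo (0:ℝ) 1) = volume.restrict (Set.Ioc 0 1) :=
      Measure.restrict_congr_set Ioo_ae_eq_Ioc
    have h2 : (1:ENNReal) ≤ ∫⁻ t in Set.Ioo (0:ℝ) 1, ENNReal.ofReal (g t) := by
      rw [hres]
      calc (1:ENNReal) = ENNReal.ofReal 1 := by simp
        _ ≤ ENNReal.ofReal (∫ t in Set.Ioc (0:ℝ) 1, g t) := ENNReal.ofReal_le_ofReal hIoc
        _ = ∫⁻ t in Set.Ioc (0:ℝ) 1, ENNReal.ofReal (g t) :=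
            ofReal_integral_eq_lintegral_ofReal hgi
              (ae_of_all _ fun t => mul_nonneg (hnn _) ha.le)
    -- Cauchy–Schwarz on (0,1)
    set φ : ℝ → ENNReal := fun t => ENNReal.ofReal (g t) with hφ
    have hφm : Measurable φ :=
      ENNReal.measurable_ofReal.comp ((hmeas.comp hγc.measurable).mul measurable_const)
    have hpq : Real.HolderConjugate 2 2 := Real.HolderConjugate.two_two
    have hCS := ENNReal.lintegral_mul_le_Lp_mul_Lq (volume.restrict (Set.Ioo (0:ℝ) 1)) hpq
      hφm.aemeasurable (aemeasurable_const (b := (1:ENNReal)))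
    simp only [Pi.mul_apply, mul_one, ENNReal.one_rpow, lintegral_const,
      Measure.restrict_apply MeasurableSet.univ, Set.univ_inter, Real.volume_Ioo,
      sub_zero, ENNReal.ofReal_one, ENNReal.one_rpow] at hCS
    have h3 : (1:ENNReal) ≤ (∫⁻ t in Set.Ioo (0:ℝ) 1, φ t ^ (2:ℝ)) ^ (1/2:ℝ) := by
      calc (1:ENNReal) ≤ ∫⁻ t in Set.Ioo (0:ℝ) 1, φ t := h2
        _ ≤ (∫⁻ t in Set.Ioo (0:ℝ) 1, φ t ^ (2:ℝ)) ^ (1/2:ℝ) := hCS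
    have hK1 : (1:ENNReal) ≤ ∫⁻ t in Set.Ioo (0:ℝ) 1, φ t ^ (2:ℝ) := by
      calc (1:ENNReal) = (1:ENNReal) ^ (2:ℝ) := by simp
        _ ≤ ((∫⁻ t in Set.Ioo (0:ℝ) 1, φ t ^ (2:ℝ)) ^ (1/2:ℝ)) ^ (2:ℝ) :=
            ENNReal.rpow_le_rpow h3 (by norm_num)
        _ = ∫⁻ t in Set.Ioo (0:ℝ) 1, φ t ^ (2:ℝ) := by
            rw [← ENNReal.rpow_mul]; norm_num
    have hsq : ∀ t : ℝ, φ t ^ (2:ℝ) = ENNReal.ofReal (a^2) * F (γ t) := by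
      intro t
      show ENNReal.ofReal (g t) ^ (2:ℝ) = _
      rw [ENNReal.ofReal_rpow_of_nonneg (mul_nonneg (hnn _) ha.le) (by norm_num)]
      have h4 : (g t) ^ (2:ℝ) = a^2 * (ρ (γ t))^2 := by
        rw [Real.rpow_two]
        show (ρ (γ t) * a)^2 = _
        ring
      rw [h4, ENNReal.ofReal_mul (by positivity)]
    have hK2 : (1:ENNReal) ≤ ENNReal.ofReal (a^2) * ∫⁻ t in Set.Ioo (0:ℝ) 1, F (γ t) := by
      calc (1:ENNReal) ≤ ∫⁻ t in Set.Ioo (0:ℝ) 1, φ t ^ (2:ℝ) := hK1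
        _ = ∫⁻ t in Set.Ioo (0:ℝ) 1, ENNReal.ofReal (a^2) * F (γ t) := by
            apply lintegral_congr; intro t; exact hsq t
        _ = ENNReal.ofReal (a^2) * ∫⁻ t in Set.Ioo (0:ℝ) 1, F (γ t) :=
            lintegral_const_mul' _ _ ENNReal.ofReal_ne_top
    -- substitution x = a t
    set G : ℝ → ENNReal := fun x => F ((x:ℂ) + (y:ℂ) * Complex.I) with hG
    have hGm : Measurable G := hFmeas.comp (by fun_prop)
    have hpre : (fun x : ℝ => a * x) ⁻¹' Set.Ioo 0 a = Set.Ioo 0 1 := by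
      rw [Set.preimage_const_mul_Ioo₀ _ _ ha, zero_div, div_self ha.ne']
    have hmapmeas : Measure.map (fun x : ℝ => a * x) (volume.restrict (Set.Ioo (0:ℝ) 1))
        = ENNReal.ofReal a⁻¹ • volume.restrict (Set.Ioo 0 a) := by
      rw [← hpre, ← Measure.restrict_map (measurable_const_mul a) measurableSet_Ioo,
        Real.map_volume_mul_left ha.ne', Measure.restrict_smul,
        abs_of_pos (inv_pos.2 ha)]
    have hsub : ∫⁻ t in Set.Ioo (0:ℝ) 1, F (γ t)
        = ENNReal.ofReal a⁻¹ * ∫⁻ x in Set.Ioo 0 a, G x := by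
      have h5 : ∫⁻ t in Set.Ioo (0:ℝ) 1, F (γ t)
          = ∫⁻ t in Set.Ioo (0:ℝ) 1, G (a * t) := by
        apply lintegral_congr; intro t; simp [hG, hγdef]
      rw [h5, ← lintegral_map hGm (measurable_const_mul a), hmapmeas,
        lintegral_smul_measure, smul_eq_mul]
    have hX : (1:ENNReal) ≤ ENNReal.ofReal a * ∫⁻ x in Set.Ioo 0 a, G x := by
      calc (1:ENNReal) ≤ ENNReal.ofReal (a^2) *
            (ENNReal.ofReal a⁻¹ * ∫⁻ x in Set.Ioo 0 a, G x) := by rw [← hsub]; exact hK2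
        _ = ENNReal.ofReal a * ∫⁻ x in Set.Ioo 0 a, G x := by
            rw [← mul_assoc, ← ENNReal.ofReal_mul (by positivity)]
            congr 2
            field_simp
    calc ENNReal.ofReal (1/a) = (ENNReal.ofReal a)⁻¹ * 1 := by
          rw [one_div, ENNReal.ofReal_inv_of_pos ha, mul_one]
      _ ≤ (ENNReal.ofReal a)⁻¹ * (ENNReal.ofReal a * ∫⁻ x in Set.Ioo 0 a, G x) :=
          mul_le_mul_right hX _
      _ = ∫⁻ x in Set.Ioo 0 a, G x := by
          rw [← mul_assoc, ENNReal.inv_mul_cancel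
            (ENNReal.ofReal_pos.2 ha).ne' ENNReal.ofReal_ne_top, one_mul]
  -- conclude by Tonelli
  set f2 : ℝ × ℝ → ENNReal := fun p => F ((p.1:ℂ) + (p.2:ℂ) * Complex.I) with hf2
  have hf2m : Measurable f2 := hFmeas.comp (by fun_prop)
  have hfirst : ∫⁻ z in (Complex.measurableEquivRealProd ⁻¹'
        ((Set.Ioo 0 a) ×ˢ (Set.Ioo 0 b))), F z
      = ∫⁻ p in (Set.Ioo 0 a) ×ˢ (Set.Ioo 0 b), f2 p := by
    rw [← Complex.volume_preserving_equiv_real_prod.setLIntegral_comp_preimage_emb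
      (Complex.measurableEquivRealProd.measurableEmbedding) f2 _]
    apply lintegral_congr
    intro z
    simp only [hf2, Complex.measurableEquivRealProd_apply, Complex.re_add_im]
  have htonelli : ∫⁻ p in (Set.Ioo 0 a) ×ˢ (Set.Ioo 0 b), f2 p
      = ∫⁻ y in Set.Ioo (0:ℝ) b, ∫⁻ x in Set.Ioo (0:ℝ) a, f2 (x, y) := by
    rw [MeasureTheory.Measure.volume_eq_prod, ← Measure.prod_restrict,
      lintegral_prod_symm _ hf2m.aemeasurable]
  calc ENNReal.ofReal (b/a) = ENNReal.ofReal (1/a) * volume (Set.Ioo (0:ℝ) b) := by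
        rw [Real.volume_Ioo, sub_zero, ← ENNReal.ofReal_mul (by positivity)]
        congr 1
        ring
    _ = ∫⁻ _ in Set.Ioo (0:ℝ) b, ENNReal.ofReal (1/a) := (setLIntegral_const _ _).symm
    _ ≤ ∫⁻ y in Set.Ioo (0:ℝ) b, ∫⁻ x in Set.Ioo (0:ℝ) a, f2 (x, y) := by
        apply lintegral_mono_ae
        exact (ae_restrict_iff' measurableSet_Ioo).2 (ae_of_all _ fun y hy => key y hy)
    _ = ∫⁻ z in (Complex.measurableEquivRealProd ⁻¹'
          ((Set.Ioo 0 a) ×ˢ (Set.Ioo 0 b))), F z := by rw [hfirst, htonelli]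
    _ ≤ ∫⁻ z, F z := setLIntegral_le_lintegral _ _

end ModulusRect

/-- The modulus of the family of curves in the rectangle `[0,a] × [0,b]` joining the two
vertical sides equals `b / a`. -/
theorem modulus_rectangle (a b : ℝ) (ha : 0 < a) (hb : 0 < b) :
    modulus {γ : ℝ → ℂ | ContDiff ℝ 1 γ ∧
      (∀ t ∈ Set.Icc (0:ℝ) 1, (γ t).re ∈ Set.Icc 0 a ∧ (γ t).im ∈ Set.Icc 0 b) ∧
      (γ 0).re = 0 ∧ (γ 1).re = a} = ENNReal.ofReal (b / a) := by
  rw [show {γ : ℝ → ℂ | ContDiff ℝ 1 γ ∧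
      (∀ t ∈ Set.Icc (0:ℝ) 1, (γ t).re ∈ Set.Icc 0 a ∧ (γ t).im ∈ Set.Icc 0 b) ∧
      (γ 0).re = 0 ∧ (γ 1).re = a} = ModulusRect.Fam a b from rfl]
  exact le_antisymm (ModulusRect.upper ha hb) (ModulusRect.lower ha hb)
end

section
/- Let λ = A(s+ti) with A(z) = (−z+1)/(z+1), s > 0, t ∈ ℝ. Then ((s²+t²)/s) / (2/(1−|λ|)) → 1 as s + |t| → ∞; in particular s + |t| → ∞ if and only if λ → −1. -/
set_option maxHeartbeats 800000
open Complex

lemma aux_abs_plus (s t : ℝ) :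
    ‖((((s:ℂ)+t*I)) + 1)‖ = Real.sqrt ((s+1)^2 + t^2) := by
  rw [Complex.norm_def, Complex.normSq_apply]
  simp
  ring_nf

lemma aux_abs_minus (s t : ℝ) :
    ‖(-(((s:ℂ)+t*I)) + 1)‖ = Real.sqrt ((s-1)^2 + t^2) := by
  rw [Complex.norm_def, Complex.normSq_apply]
  simp
  ring_nf

lemma aux_ne (s t : ℝ) (hs : 0 < s) : ((s:ℂ)+t*I) + 1 ≠ 0 := by
  intro h
  have := congrArg Complex.re h
  simp at this
  linarith

lemma aux_abs_A (A : ℂ → ℂ) (hA : ∀ z : ℂ, A z = (-z + 1) / (z + 1)) (s t : ℝ) (hs : 0 < s) :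
    ‖A ((s : ℂ) + t * I)‖ = Real.sqrt ((s-1)^2 + t^2) / Real.sqrt ((s+1)^2 + t^2) := by
  rw [hA, norm_div, aux_abs_plus, aux_abs_minus]

lemma aux_abs_A1 (A : ℂ → ℂ) (hA : ∀ z : ℂ, A z = (-z + 1) / (z + 1)) (s t : ℝ) (hs : 0 < s) :
    ‖A ((s : ℂ) + t * I) + 1‖ = 2 / Real.sqrt ((s+1)^2 + t^2) := by
  have hne := aux_ne s t hs
  have h : A ((s : ℂ) + t * I) + 1 = 2 / (((s:ℂ)+t*I) + 1) := by
    rw [hA]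
    field_simp
    ring
  rw [h, norm_div, aux_abs_plus]
  simp

lemma aux_a_lb (s t : ℝ) (hs : 0 < s) : (s + |t|)/2 ≤ Real.sqrt ((s+1)^2 + t^2) := by
  rw [show (s + |t|)/2 = Real.sqrt (((s+|t|)/2)^2) from (Real.sqrt_sq (by positivity)).symm]
  apply Real.sqrt_le_sqrt
  nlinarith [_root_.sq_abs t, abs_nonneg t, sq_nonneg (s - |t|)]

lemma aux_a_ub (s t : ℝ) (hs : 0 < s) : Real.sqrt ((s+1)^2 + t^2) ≤ s + |t| + 1 := by
  rw [show s + |t| + 1 = Real.sqrt ((s+|t|+1)^2) from (Real.sqrt_sq (by positivity)).symm]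
  apply Real.sqrt_le_sqrt
  nlinarith [_root_.sq_abs t, abs_nonneg t]

/-- With `λ = A(s+ti)`, `A(z) = (−z+1)/(z+1)`, `s > 0`:
`((s²+t²)/s)/(2/(1−|λ|)) → 1` as `s+|t| → ∞`; in particular `s+|t| → ∞` iff `λ → −1`. -/
theorem asymptotics_of_parameter (A : ℂ → ℂ) (hA : ∀ z : ℂ, A z = (-z + 1) / (z + 1)) :
    (∀ ε > (0:ℝ), ∃ M : ℝ, ∀ s t : ℝ, 0 < s → M ≤ s + |t| →
      |((s ^ 2 + t ^ 2) * (1 - ‖A ((s : ℂ) + t * I)‖)) / (2 * s) - 1| < ε) ∧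
    (∀ δ > (0:ℝ), ∃ M : ℝ, ∀ s t : ℝ, 0 < s → M ≤ s + |t| →
      ‖A ((s : ℂ) + t * I) + 1‖ < δ) ∧
    (∀ M : ℝ, ∃ δ > (0:ℝ), ∀ s t : ℝ, 0 < s →
      ‖A ((s : ℂ) + t * I) + 1‖ < δ → M ≤ s + |t|) := by
  refine ⟨?_, ?_, ?_⟩
  · -- Part 1
    intro ε hε
    refine ⟨8/ε + 4, fun s t hs hM => ?_⟩
    rw [aux_abs_A A hA s t hs]
    set a := Real.sqrt ((s+1)^2 + t^2) with hadef
    set b := Real.sqrt ((s-1)^2 + t^2) with hbdef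
    set r := Real.sqrt (s^2 + t^2) with hrdef
    have ha2 : a^2 = (s+1)^2 + t^2 := Real.sq_sqrt (by positivity)
    have hb2 : b^2 = (s-1)^2 + t^2 := Real.sq_sqrt (by positivity)
    have hr2 : r^2 = s^2 + t^2 := Real.sq_sqrt (by positivity)
    have ha0 : 0 < a := Real.sqrt_pos.mpr (by nlinarith [sq_nonneg t])
    have hb0 : 0 ≤ b := Real.sqrt_nonneg _
    have hr0 : 0 ≤ r := Real.sqrt_nonneg _
    have hsr : s ≤ r := by nlinarith [sq_nonneg t]
    have htr : |t| ≤ r := by nlinarith [abs_nonneg t, _root_.sq_abs t, sq_nonneg s]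
    have hstr : s + |t| ≤ 2*r := by nlinarith
    have hrbig : 4/ε + 2 ≤ r := by
      have h8 : (8:ℝ)/ε = 2*(4/ε) := by ring
      have : 8/ε + 4 ≤ 2*r := le_trans hM hstr
      linarith
    have hεr : 4 < ε * r := by
      have h4 : 0 < 4/ε := by positivity
      have h5 : 4/ε < r := by linarith
      calc (4:ℝ) = ε * (4/ε) := by field_simp
      _ < ε * r := (mul_lt_mul_iff_right₀ hε).mpr h5
    have hr2' : 2 ≤ r := by
      have : 0 ≤ 4/ε := by positivity
      linarith
    have har : a ≤ r + 1 := by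
      rw [hadef, show r + 1 = Real.sqrt ((r+1)^2) from (Real.sqrt_sq (by linarith)).symm]
      exact Real.sqrt_le_sqrt (by nlinarith)
    have har' : r ≤ a := Real.sqrt_le_sqrt (by nlinarith)
    have hbr : r - 1 ≤ b := by
      rw [hbdef, show r - 1 = Real.sqrt ((r-1)^2) from (Real.sqrt_sq (by linarith)).symm]
      exact Real.sqrt_le_sqrt (by nlinarith)
    have hbr' : b ≤ r + 1 := by
      rw [hbdef, show r + 1 = Real.sqrt ((r+1)^2) from (Real.sqrt_sq (by linarith)).symm]
      exact Real.sqrt_le_sqrt (by nlinarith)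
    clear_value a b r
    have hab : a^2 - b^2 = 4*s := by rw [ha2, hb2]; ring
    have hab0 : 0 < a + b := by linarith
    have hE : (s ^ 2 + t ^ 2) * (1 - b / a) / (2 * s) = 2*(s^2+t^2)/(a*(a+b)) := by
      have h1 : 1 - b/a = 4*s/(a*(a+b)) := by
        rw [eq_div_iff (by positivity)]
        field_simp
        nlinarith
      rw [h1]
      field_simp
      ring
    rw [hE]
    have hD0 : 0 < a * (a+b) := by positivity
    have hD_ub : a*(a+b) ≤ (r+1)*((r+1)+(r+1)) :=
      mul_le_mul har (add_le_add har hbr') (by positivity) (by linarith)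
    have hD_lb : r*(2*r-1) ≤ a*(a+b) :=
      mul_le_mul har' (by linarith) (by linarith) (by linarith)
    have hεD : 4*(2*r-1) < ε*(a*(a+b)) := by
      have h1 : 4*(2*r-1) < (ε*r)*(2*r-1) := by nlinarith
      have h3 : ε*(r*(2*r-1)) ≤ ε*(a*(a+b)) := mul_le_mul_of_nonneg_left hD_lb hε.le
      nlinarith
    rw [abs_lt]
    constructor
    · have h : (1-ε) * (a*(a+b)) < 2*(s^2+t^2) := by nlinarith [hεD, hD_ub, hr2, hr2']
      have := (lt_div_iff₀ hD0).mpr h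
      linarith
    · have h : 2*(s^2+t^2) < (1+ε) * (a*(a+b)) := by nlinarith [hεD, hD_lb, hr2, hr2']
      have := (div_lt_iff₀ hD0).mpr h
      linarith
  · -- Part 2
    intro δ hδ
    refine ⟨4/δ + 1, fun s t hs hM => ?_⟩
    rw [aux_abs_A1 A hA s t hs]
    have hM0 : (0:ℝ) < 4/δ + 1 := by positivity
    have hst0 : 0 < s + |t| := lt_of_lt_of_le hM0 hM
    have haL := aux_a_lb s t hs
    have ha0 : 0 < Real.sqrt ((s+1)^2 + t^2) := lt_of_lt_of_le (by positivity) haL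
    have h1 : 2 / Real.sqrt ((s+1)^2 + t^2) ≤ 4/(s + |t|) := by
      rw [div_le_div_iff₀ ha0 hst0]
      linarith
    have h2 : 4/(s + |t|) ≤ 4/(4/δ + 1) := by
      apply div_le_div_of_nonneg_left (by norm_num) hM0 hM
    have h3 : 4/(4/δ + 1) < δ := by
      rw [div_lt_iff₀ hM0]
      have : δ * (4/δ + 1) = 4 + δ := by field_simp
      linarith
    linarith
  · -- Part 3
    intro M
    set K := max M 0 with hK
    refine ⟨2/(K+1), by positivity, fun s t hs h => ?_⟩
    rw [aux_abs_A1 A hA s t hs] at h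
    have haU := aux_a_ub s t hs
    have haL := aux_a_lb s t hs
    have ha0 : 0 < Real.sqrt ((s+1)^2 + t^2) := lt_of_lt_of_le (by positivity) haL
    have hK0 : (0:ℝ) < K + 1 := by positivity
    have h2 : K + 1 < Real.sqrt ((s+1)^2 + t^2) := by
      rw [div_lt_div_iff₀ ha0 hK0] at h
      linarith
    have hMK : M ≤ K := le_max_left M 0
    linarith
end
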